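/- Let A and B be sets of positive integers with Shnirel'man densities σ(A) and σ(B). If σ(A) + σ(B) ≥ 1, then A + B = ℕ₀, i.e., every nonnegative integer is a sum a + b with a ∈ A ∪ {0} and b ∈ B ∪ {0}. -/

import Mathlib

/-- The Shnirel'man density of a set of positive integers:
`σ(A) = inf { A(n)/n : n ∈ ℕ, n ≥ 1 }` where `A(n) = #{a ∈ A : 1 ≤ a ≤ n}`. -/
noncomputable def shnirelmanDensity (A : Set ℕ) : ℝ :=
  sInf {r : ℝ | ∃ n : ℕ, 0 < n ∧ r = ((A ∩ Set.Icc 1 n).ncard : ℝ) / (n : ℝ)}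

/-- The sumset `A + B = {a + b : a ∈ A ∪ {0}, b ∈ B ∪ {0}}`. -/
def sumset (A B : Set ℕ) : Set ℕ :=
  {n | ∃ a ∈ A ∪ {0}, ∃ b ∈ B ∪ {0}, a + b = n}

lemma shnirelmanDensity_le (A : Set ℕ) {n : ℕ} (hn : 0 < n) :
    shnirelmanDensity A ≤ ((A ∩ Set.Icc 1 n).ncard : ℝ) / (n : ℝ) := by
  apply csInf_le
  · exact ⟨0, fun r ⟨m, hm, hr⟩ => by rw [hr]; positivity⟩
  · exact ⟨n, hn, rfl⟩

/-- If `A` and `B` are sets of positive integers with `σ(A) + σ(B) ≥ 1`,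
then `A + B = ℕ₀`. -/
theorem sumset_eq_univ_of_one_le_add_density
    (A B : Set ℕ) (hA : A ⊆ {n | 0 < n}) (hB : B ⊆ {n | 0 < n})
    (h : 1 ≤ shnirelmanDensity A + shnirelmanDensity B) :
    sumset A B = Set.univ := by
  ext n
  simp only [Set.mem_univ, iff_true]
  rcases Nat.eq_zero_or_pos n with rfl | hn
  · exact ⟨0, Or.inr rfl, 0, Or.inr rfl, rfl⟩
  by_contra hns
  have hnA : n ∉ A := fun hmem => hns ⟨n, Or.inl hmem, 0, Or.inr rfl, add_zero n⟩
  have hnB : n ∉ B := fun hmem => hns ⟨0, Or.inr rfl, n, Or.inl hmem, zero_add n⟩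
  set S := A ∩ Set.Icc 1 n with hS
  set T := (fun b => n - b) '' (B ∩ Set.Icc 1 n) with hT
  have hSfin : S.Finite := Set.Finite.inter_of_right (Set.finite_Icc 1 n) A
  have hBfin : (B ∩ Set.Icc 1 n).Finite := Set.Finite.inter_of_right (Set.finite_Icc 1 n) B
  have hTfin : T.Finite := hBfin.image _
  -- injectivity on B ∩ [1,n]
  have hinj : Set.InjOn (fun b => n - b) (B ∩ Set.Icc 1 n) := by
    intro x ⟨_, _, hx⟩ y ⟨_, _, hy⟩ hxy
    simp only at hxy
    omega
  have hTcard : T.ncard = (B ∩ Set.Icc 1 n).ncard := Set.ncard_image_of_injOn hinj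
  -- S and T are disjoint
  have hdisj : Disjoint S T := by
    rw [Set.disjoint_left]
    rintro a ⟨haA, _, han⟩ ⟨b, ⟨hbB, hb1, hbn⟩, hab⟩
    have hab' : n - b = a := hab
    exact hns ⟨a, Or.inl haA, b, Or.inl hbB, by omega⟩
  -- S ∪ T ⊆ Icc 1 (n-1)
  have hsub : S ∪ T ⊆ Set.Icc 1 (n - 1) := by
    rintro x (⟨hxA, hx1, hxn⟩ | ⟨b, ⟨hbB, hb1, hbn⟩, hbx⟩)
    · have hne : x ≠ n := fun hx => hnA (hx ▸ hxA)
      exact ⟨hx1, by omega⟩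
    · have hbx' : n - b = x := hbx
      have hne : b ≠ n := fun hb => hnB (hb ▸ hbB)
      constructor <;> omega
  have hcard : S.ncard + T.ncard ≤ n - 1 := by
    rw [← Set.ncard_union_eq hdisj hSfin hTfin]
    calc (S ∪ T).ncard ≤ (Set.Icc 1 (n-1)).ncard :=
          Set.ncard_le_ncard hsub (Set.finite_Icc _ _)
      _ = n - 1 := by
          rw [← Finset.coe_Icc, Set.ncard_coe_finset, Nat.card_Icc]; omega
  -- lower bound from densities
  have h1 : ((A ∩ Set.Icc 1 n).ncard : ℝ) / n + ((B ∩ Set.Icc 1 n).ncard : ℝ) / n ≥ 1 :=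
    le_trans h (add_le_add (shnirelmanDensity_le A hn) (shnirelmanDensity_le B hn))
  have hnpos : (0:ℝ) < n := by exact_mod_cast hn
  have h2 : (n : ℝ) ≤ ((A ∩ Set.Icc 1 n).ncard : ℝ) + ((B ∩ Set.Icc 1 n).ncard : ℝ) := by
    have := mul_le_mul_of_nonneg_right h1 hnpos.le
    rw [← add_div, div_mul_cancel₀] at this
    · linarith
    · exact hnpos.ne'
  have h3 : n ≤ (A ∩ Set.Icc 1 n).ncard + (B ∩ Set.Icc 1 n).ncard := by exact_mod_cast h2
  rw [hTcard, hS] at hcard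
  omega
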